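/- Let rings A and B be symmetric separably equivalent with context (P, Q, ν, μ). Then the map End({}_BQ) → P ⊗_B Q sending β to Σⱼ pⱼ ⊗ β(qⱼ) is an anti-isomorphism of rings from the endomorphism ring of Q as a left B-module onto P ⊗_B Q with the μ-multiplication. -/

import Mathlib

/-! ### A balanced tensor product of a right module and a left module
over a possibly noncommutative ring, constructed as a quotient of the
`ℤ`-tensor product. -/

open MulOpposite
open scoped TensorProduct

section BalCore

variable (R : Type*) [Ring R] (M : Type*) [AddCommGroup M] [Module Rᵐᵒᵖ M]
  (N : Type*) [AddCommGroup N] [Module R N]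

/-- The subgroup of relations defining the balanced tensor product. -/
def balRel : Submodule ℤ (TensorProduct ℤ M N) :=
  Submodule.span ℤ {x | ∃ (m : M) (r : R) (n : N), x = (op r • m) ⊗ₜ[ℤ] n - m ⊗ₜ[ℤ] (r • n)}

/-- The balanced tensor product `M ⊗[R] N` of a right `R`-module `M` and a
left `R`-module `N`. -/
def Bal : Type _ := TensorProduct ℤ M N ⧸ balRel R M N

noncomputable instance : AddCommGroup (Bal R M N) := Submodule.Quotient.addCommGroup _

variable {M N}

/-- The canonical image of `m ⊗ n` in the balanced tensor product. -/
noncomputable def Bal.tmul (m : M) (n : N) : Bal R M N := Submodule.Quotient.mk (m ⊗ₜ[ℤ] n)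

theorem Bal.add_tmul (m m' : M) (n : N) :
    Bal.tmul R (m + m') n = Bal.tmul R m n + Bal.tmul R m' n := by
  show Submodule.Quotient.mk _ = _
  rw [TensorProduct.add_tmul]
  rfl

theorem Bal.tmul_add (m : M) (n n' : N) :
    Bal.tmul R m (n + n') = Bal.tmul R m n + Bal.tmul R m n' := by
  show Submodule.Quotient.mk _ = _
  rw [TensorProduct.tmul_add]
  rfl

theorem Bal.zero_tmul (n : N) : Bal.tmul R (0 : M) n = 0 := by
  show Submodule.Quotient.mk _ = _
  rw [TensorProduct.zero_tmul]
  rfl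

theorem Bal.tmul_zero (m : M) : Bal.tmul R m (0 : N) = 0 := by
  show Submodule.Quotient.mk _ = _
  rw [TensorProduct.tmul_zero]
  rfl

/-- The fundamental balancing relation `(m · r) ⊗ n = m ⊗ (r · n)`. -/
theorem Bal.op_smul_tmul (m : M) (r : R) (n : N) :
    Bal.tmul R (op r • m) n = Bal.tmul R m (r • n) :=
  (Submodule.Quotient.eq _).2 (Submodule.subset_span ⟨m, r, n, rfl⟩)

theorem Bal.induction_on {C : Bal R M N → Prop} (x : Bal R M N) (zero : C 0)
    (tmul : ∀ m n, C (Bal.tmul R m n)) (add : ∀ x y, C x → C y → C (x + y)) : C x := by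
  obtain ⟨y, rfl⟩ := Submodule.Quotient.mk_surjective _ x
  induction y using TensorProduct.induction_on with
  | zero => exact zero
  | tmul m n => exact tmul m n
  | add a b ha hb =>
      have : (Submodule.Quotient.mk (a + b) : Bal R M N)
          = Submodule.Quotient.mk a + Submodule.Quotient.mk b := rfl
      rw [this]; exact add _ _ ha hb

/-- Lift a balanced biadditive map to the balanced tensor product. -/
noncomputable def Bal.liftFun {T : Type*} [AddCommGroup T] (f : M → N → T)
    (h1 : ∀ m m' n, f (m + m') n = f m n + f m' n)
    (h2 : ∀ m n n', f m (n + n') = f m n + f m n')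
    (h3 : ∀ (m : M) (r : R) (n : N), f (op r • m) n = f m (r • n)) : Bal R M N →+ T :=
  letI f₂ : M →+ N →+ T :=
    AddMonoidHom.mk' (fun m => AddMonoidHom.mk' (f m) (h2 m))
      (fun m m' => AddMonoidHom.ext fun n => h1 m m' n)
  letI bil : M →ₗ[ℤ] N →ₗ[ℤ] T :=
    { toFun := fun m => (f₂ m).toIntLinearMap
      map_add' := fun m m' => LinearMap.ext fun n => by simp
      map_smul' := fun z m => LinearMap.ext fun n => by
        simp [map_zsmul] }
  ((balRel R M N).liftQ (TensorProduct.lift bil) (by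
    rw [balRel, Submodule.span_le]
    rintro x ⟨m, r, n, rfl⟩
    simp only [SetLike.mem_coe]
    change TensorProduct.lift bil _ = 0
    simp [bil, f₂, h3 m r n])).toAddMonoidHom

@[simp] theorem Bal.liftFun_tmul {T : Type*} [AddCommGroup T] (f : M → N → T)
    (h1 : ∀ m m' n, f (m + m') n = f m n + f m' n)
    (h2 : ∀ m n n', f m (n + n') = f m n + f m n')
    (h3 : ∀ (m : M) (r : R) (n : N), f (op r • m) n = f m (r • n)) (m : M) (n : N) :
    Bal.liftFun R f h1 h2 h3 (Bal.tmul R m n) = f m n := by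
  simp [Bal.liftFun, Bal.tmul, Submodule.Quotient.mk]
  rfl

theorem Bal.addHom_ext {T : Type*} [AddCommGroup T] {f g : Bal R M N →+ T}
    (h : ∀ m n, f (Bal.tmul R m n) = g (Bal.tmul R m n)) : f = g := by
  ext x
  refine Bal.induction_on R (C := fun z => f z = g z) x (by simp) h
    (fun x y hx hy => by simp only [map_add]; rw [hx, hy])

end BalCore
section BalModule

variable (R : Type*) [Ring R] {M : Type*} [AddCommGroup M] [Module Rᵐᵒᵖ M]
  {N : Type*} [AddCommGroup N] [Module R N]

section Left

variable {S : Type*} [Ring S] [Module S M] [SMulCommClass S Rᵐᵒᵖ M]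

/-- The left action on the balanced tensor product through the first factor. -/
noncomputable def Bal.lsmulHom (s : S) : Bal R M N →+ Bal R M N :=
  Bal.liftFun R (fun m n => Bal.tmul R (s • m) n)
    (fun m m' n => by
      show Bal.tmul R (s • (m + m')) n = Bal.tmul R (s • m) n + Bal.tmul R (s • m') n
      rw [smul_add, Bal.add_tmul])
    (fun m n n' => Bal.tmul_add R _ n n')
    (fun m r n => by
      show Bal.tmul R (s • op r • m) n = Bal.tmul R (s • m) (r • n)
      rw [smul_comm, Bal.op_smul_tmul])

theorem Bal.lsmulHom_tmul (s : S) (m : M) (n : N) :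
    Bal.lsmulHom R (M := M) (N := N) s (Bal.tmul R m n) = Bal.tmul R (s • m) n :=
  Bal.liftFun_tmul R _ _ _ _ m n

noncomputable instance : SMul S (Bal R M N) := ⟨fun s x => Bal.lsmulHom R s x⟩

theorem Bal.lsmul_tmul (s : S) (m : M) (n : N) :
    s • Bal.tmul R m n = Bal.tmul R (s • m) n :=
  Bal.lsmulHom_tmul R s m n

theorem Bal.lsmul_one : Bal.lsmulHom R (M := M) (N := N) (1 : S) = AddMonoidHom.id _ :=
  Bal.addHom_ext R fun m n => by
    rw [Bal.lsmulHom_tmul, one_smul, AddMonoidHom.id_apply]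

theorem Bal.lsmul_mul (s t : S) :
    Bal.lsmulHom R (M := M) (N := N) (s * t) = (Bal.lsmulHom R s).comp (Bal.lsmulHom R t) :=
  Bal.addHom_ext R fun m n => by
    rw [AddMonoidHom.comp_apply, Bal.lsmulHom_tmul, Bal.lsmulHom_tmul, Bal.lsmulHom_tmul,
      mul_smul]

theorem Bal.lsmul_addsmul (s t : S) :
    Bal.lsmulHom R (M := M) (N := N) (s + t) = Bal.lsmulHom R s + Bal.lsmulHom R t :=
  Bal.addHom_ext R fun m n => by
    rw [AddMonoidHom.add_apply, Bal.lsmulHom_tmul, Bal.lsmulHom_tmul, Bal.lsmulHom_tmul,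
      add_smul, Bal.add_tmul]

theorem Bal.lsmul_zerosmul : Bal.lsmulHom R (M := M) (N := N) (0 : S) = 0 :=
  Bal.addHom_ext R fun m n => by
    rw [Bal.lsmulHom_tmul, zero_smul, Bal.zero_tmul, AddMonoidHom.zero_apply]

noncomputable instance : Module S (Bal R M N) where
  one_smul x := DFunLike.congr_fun (Bal.lsmul_one R (M := M) (N := N) (S := S)) x
  mul_smul s t x := DFunLike.congr_fun (Bal.lsmul_mul R s t) x
  smul_zero s := (Bal.lsmulHom R (M := M) (N := N) s).map_zero
  smul_add s x y := (Bal.lsmulHom R s).map_add x y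
  add_smul s t x := DFunLike.congr_fun (Bal.lsmul_addsmul R s t) x
  zero_smul x := DFunLike.congr_fun (Bal.lsmul_zerosmul R (M := M) (N := N) (S := S)) x

end Left

section Right

variable {S : Type*} [Ring S] [Module Sᵐᵒᵖ N] [SMulCommClass R Sᵐᵒᵖ N]

/-- The right action on the balanced tensor product through the second factor. -/
noncomputable def Bal.rsmulHom (s : Sᵐᵒᵖ) : Bal R M N →+ Bal R M N :=
  Bal.liftFun R (fun m n => Bal.tmul R m (s • n))
    (fun m m' n => Bal.add_tmul R m m' _)
    (fun m n n' => by
      show Bal.tmul R m (s • (n + n')) = Bal.tmul R m (s • n) + Bal.tmul R m (s • n')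
      rw [smul_add, Bal.tmul_add])
    (fun m r n => by
      show Bal.tmul R (op r • m) (s • n) = Bal.tmul R m (s • r • n)
      rw [Bal.op_smul_tmul, smul_comm])

theorem Bal.rsmulHom_tmul (s : Sᵐᵒᵖ) (m : M) (n : N) :
    Bal.rsmulHom R (M := M) (N := N) s (Bal.tmul R m n) = Bal.tmul R m (s • n) :=
  Bal.liftFun_tmul R _ _ _ _ m n

noncomputable instance : SMul Sᵐᵒᵖ (Bal R M N) := ⟨fun s x => Bal.rsmulHom R s x⟩

theorem Bal.rsmul_tmul (s : Sᵐᵒᵖ) (m : M) (n : N) :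
    s • Bal.tmul R m n = Bal.tmul R m (s • n) :=
  Bal.rsmulHom_tmul R s m n

theorem Bal.rsmul_one : Bal.rsmulHom R (M := M) (N := N) (1 : Sᵐᵒᵖ) = AddMonoidHom.id _ :=
  Bal.addHom_ext R fun m n => by
    rw [Bal.rsmulHom_tmul, one_smul, AddMonoidHom.id_apply]

theorem Bal.rsmul_mul (s t : Sᵐᵒᵖ) :
    Bal.rsmulHom R (M := M) (N := N) (s * t) = (Bal.rsmulHom R s).comp (Bal.rsmulHom R t) :=
  Bal.addHom_ext R fun m n => by
    rw [AddMonoidHom.comp_apply, Bal.rsmulHom_tmul, Bal.rsmulHom_tmul, Bal.rsmulHom_tmul,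
      mul_smul]

theorem Bal.rsmul_addsmul (s t : Sᵐᵒᵖ) :
    Bal.rsmulHom R (M := M) (N := N) (s + t) = Bal.rsmulHom R s + Bal.rsmulHom R t :=
  Bal.addHom_ext R fun m n => by
    rw [AddMonoidHom.add_apply, Bal.rsmulHom_tmul, Bal.rsmulHom_tmul, Bal.rsmulHom_tmul,
      add_smul, Bal.tmul_add]

theorem Bal.rsmul_zerosmul : Bal.rsmulHom R (M := M) (N := N) (0 : Sᵐᵒᵖ) = 0 :=
  Bal.addHom_ext R fun m n => by
    rw [Bal.rsmulHom_tmul, zero_smul, Bal.tmul_zero, AddMonoidHom.zero_apply]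

noncomputable instance : Module Sᵐᵒᵖ (Bal R M N) where
  one_smul x := DFunLike.congr_fun (Bal.rsmul_one R (M := M) (N := N) (S := S)) x
  mul_smul s t x := DFunLike.congr_fun (Bal.rsmul_mul R s t) x
  smul_zero s := (Bal.rsmulHom R (M := M) (N := N) s).map_zero
  smul_add s x y := (Bal.rsmulHom R s).map_add x y
  add_smul s t x := DFunLike.congr_fun (Bal.rsmul_addsmul R s t) x
  zero_smul x := DFunLike.congr_fun (Bal.rsmul_zerosmul R (M := M) (N := N) (S := S)) x

end Right

end BalModule

/-- For symmetric separably equivalent rings with context `(P,Q,ν,μ)`,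
the map `β ↦ Σⱼ pⱼ ⊗ β(qⱼ)` is an anti-isomorphism of rings from `End({}_B Q)` onto
`P ⊗[B] Q` with the `μ`-multiplication. -/
theorem end_Q_anti_isomorphism
    {A B P Q : Type*} [Ring A] [Ring B]
    [AddCommGroup P] [Module A P] [Module Bᵐᵒᵖ P] [SMulCommClass A Bᵐᵒᵖ P]
    [AddCommGroup Q] [Module B Q] [Module Aᵐᵒᵖ Q] [SMulCommClass B Aᵐᵒᵖ Q]
    [Module.Finite A P] [Module.Projective A P]
    [Module.Finite Bᵐᵒᵖ P] [Module.Projective Bᵐᵒᵖ P]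
    [Module.Finite B Q] [Module.Projective B Q]
    [Module.Finite Aᵐᵒᵖ Q] [Module.Projective Aᵐᵒᵖ Q]
    (ν : Bal B P Q →+ A)
    (hνl : ∀ (a : A) (x : Bal B P Q), ν (a • x) = a * ν x)
    (hνr : ∀ (a : A) (x : Bal B P Q), ν (op a • x) = ν x * a)
    (hνsurj : Function.Surjective ν)
    (hνsplit : ∃ σ : A →+ Bal B P Q,
      (∀ (a c : A), σ (a * c) = a • σ c) ∧ (∀ (a c : A), σ (c * a) = op a • σ c) ∧
      ∀ a : A, ν (σ a) = a)
    (μ : Bal A Q P →+ B)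
    (hμl : ∀ (b : B) (y : Bal A Q P), μ (b • y) = b * μ y)
    (hμr : ∀ (b : B) (y : Bal A Q P), μ (op b • y) = μ y * b)
    (hμsurj : Function.Surjective μ)
    (hμsplit : ∃ τ : B →+ Bal A Q P,
      (∀ (b c : B), τ (b * c) = b • τ c) ∧ (∀ (b c : B), τ (c * b) = op b • τ c) ∧
      ∀ b : B, μ (τ b) = b)
    (n : ℕ) (q' : Fin n → Q) (p' : Fin n → P)
    (adj1 : ∀ p : P, ∑ i, ν (Bal.tmul B p (q' i)) • p' i = p)
    (adj2 : ∀ q : Q, ∑ i, op (ν (Bal.tmul B (p' i) q)) • q' i = q)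
    (k : ℕ) (pj : Fin k → P) (qj : Fin k → Q)
    (adj3 : ∀ q : Q, ∑ j, μ (Bal.tmul A q (pj j)) • qj j = q)
    (adj4 : ∀ p : P, ∑ j, op (μ (Bal.tmul A (qj j) p)) • pj j = p)
    :
    ∀ mul : Bal B P Q → Bal B P Q → Bal B P Q,
      (∀ x y z : Bal B P Q, mul (x + y) z = mul x z + mul y z) →
      (∀ x y z : Bal B P Q, mul x (y + z) = mul x y + mul x z) →
      (∀ (p p' : P) (q q'' : Q),
        mul (Bal.tmul B p q) (Bal.tmul B p' q'')
          = Bal.tmul B (op (μ (Bal.tmul A q p')) • p) q'') →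
      (Function.Bijective
        (fun β : Module.End B Q => ∑ j, Bal.tmul B (pj j) (β (qj j))) ∧
       (∀ β γ : Module.End B Q,
         ∑ j, Bal.tmul B (pj j) ((β + γ) (qj j))
           = (∑ j, Bal.tmul B (pj j) (β (qj j))) + ∑ j, Bal.tmul B (pj j) (γ (qj j))) ∧
       (∀ β γ : Module.End B Q,
         ∑ j, Bal.tmul B (pj j) ((β * γ) (qj j))
           = mul (∑ j, Bal.tmul B (pj j) (γ (qj j))) (∑ j, Bal.tmul B (pj j) (β (qj j)))) ∧
       (∀ x : Bal B P Q,
         mul (∑ j, Bal.tmul B (pj j) ((1 : Module.End B Q) (qj j))) x = x ∧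
         mul x (∑ j, Bal.tmul B (pj j) ((1 : Module.End B Q) (qj j))) = x)) := by
  intro mul hmull hmulr hmultmul
  -- `tmul` of finite sums
  have sum_tmul : ∀ (f : Fin k → P) (q : Q),
      Bal.tmul B (∑ j, f j) q = ∑ j, Bal.tmul B (f j) q := fun f q =>
    map_sum (AddMonoidHom.mk' (fun m => Bal.tmul B m q)
      (fun a b => Bal.add_tmul B a b q)) f Finset.univ
  have tmul_sum : ∀ (p : P) (g : Fin k → Q),
      Bal.tmul B p (∑ j, g j) = ∑ j, Bal.tmul B p (g j) := fun p g =>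
    map_sum (AddMonoidHom.mk' (fun q => Bal.tmul B p q)
      (fun a b => Bal.tmul_add B p a b)) g Finset.univ
  -- `mul` with zero and sums
  have mul_zero_left : ∀ y, mul 0 y = 0 := by
    intro y
    have h := hmull 0 0 y
    rw [add_zero] at h
    exact (left_eq_add.mp h)
  have mul_zero_right : ∀ x, mul x 0 = 0 := by
    intro x
    have h := hmulr x 0 0
    rw [add_zero] at h
    exact (left_eq_add.mp h)
  have mul_sum_left : ∀ (g : Fin k → Bal B P Q) (y),
      mul (∑ j, g j) y = ∑ j, mul (g j) y := fun g y =>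
    map_sum (AddMonoidHom.mk' (fun x => mul x y) (fun a b => hmull a b y)) g Finset.univ
  have mul_sum_right : ∀ (x) (g : Fin k → Bal B P Q),
      mul x (∑ j, g j) = ∑ j, mul x (g j) := fun x g =>
    map_sum (AddMonoidHom.mk' (fun y => mul x y) (fun a b => hmulr x a b)) g Finset.univ
  -- the inverse map on simple tensors
  let f : P → Q → Module.End B Q := fun p q'' =>
    { toFun := fun q => μ (Bal.tmul A q p) • q''
      map_add' := fun q1 q2 => by
        show μ (Bal.tmul A (q1 + q2) p) • q'' = μ (Bal.tmul A q1 p) • q'' + μ (Bal.tmul A q2 p) • q''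
        rw [Bal.add_tmul, map_add, add_smul]
      map_smul' := fun b q => by
        show μ (Bal.tmul A (b • q) p) • q'' = b • (μ (Bal.tmul A q p) • q'')
        rw [← Bal.lsmul_tmul, hμl, mul_smul] }
  have hf1 : ∀ (p p₀ : P) (q'' : Q), f (p + p₀) q'' = f p q'' + f p₀ q'' := by
    intro p p₀ q''
    ext q
    show μ (Bal.tmul A q (p + p₀)) • q'' = μ (Bal.tmul A q p) • q'' + μ (Bal.tmul A q p₀) • q''
    rw [Bal.tmul_add, map_add, add_smul]
  have hf2 : ∀ (p : P) (q₁ q₂ : Q), f p (q₁ + q₂) = f p q₁ + f p q₂ := by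
    intro p q₁ q₂
    ext q
    show μ (Bal.tmul A q p) • (q₁ + q₂) = μ (Bal.tmul A q p) • q₁ + μ (Bal.tmul A q p) • q₂
    rw [smul_add]
  have hf3 : ∀ (p : P) (b : B) (q'' : Q), f (op b • p) q'' = f p (b • q'') := by
    intro p b q''
    ext q
    show μ (Bal.tmul A q (op b • p)) • q'' = μ (Bal.tmul A q p) • (b • q'')
    rw [← Bal.rsmul_tmul, hμr, mul_smul]
  let F : Bal B P Q →+ Module.End B Q := Bal.liftFun B f hf1 hf2 hf3
  have hF_tmul : ∀ (p : P) (q'' q : Q),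
      F (Bal.tmul B p q'') q = μ (Bal.tmul A q p) • q'' := by
    intro p q'' q
    rw [show F (Bal.tmul B p q'') = f p q'' from Bal.liftFun_tmul B f hf1 hf2 hf3 p q'']
    rfl
  -- F is a left inverse of Φ
  have hFPhi : ∀ β : Module.End B Q, F (∑ j, Bal.tmul B (pj j) (β (qj j))) = β := by
    intro β
    ext q
    rw [map_sum]
    calc (∑ j, F (Bal.tmul B (pj j) (β (qj j)))) q
        = ∑ j, μ (Bal.tmul A q (pj j)) • β (qj j) := by
          rw [LinearMap.sum_apply]
          exact Finset.sum_congr rfl fun j _ => hF_tmul (pj j) (β (qj j)) q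
      _ = β (∑ j, μ (Bal.tmul A q (pj j)) • qj j) := by
          rw [map_sum]
          exact Finset.sum_congr rfl fun j _ => (β.map_smul _ _).symm
      _ = β q := by rw [adj3]
  -- F is a right inverse of Φ
  have hPhiF : ∀ x : Bal B P Q, (∑ j, Bal.tmul B (pj j) (F x (qj j))) = x := by
    intro x
    induction x using Bal.induction_on with
    | zero =>
        simp only [map_zero, LinearMap.zero_apply, Bal.tmul_zero]
        exact Finset.sum_const_zero
    | tmul p q'' =>
        calc (∑ j, Bal.tmul B (pj j) (F (Bal.tmul B p q'') (qj j)))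
            = ∑ j, Bal.tmul B (pj j) (μ (Bal.tmul A (qj j) p) • q'') := by
              exact Finset.sum_congr rfl fun j _ => by rw [hF_tmul]
          _ = ∑ j, Bal.tmul B (op (μ (Bal.tmul A (qj j) p)) • pj j) q'' := by
              exact Finset.sum_congr rfl fun j _ => (Bal.op_smul_tmul B _ _ _).symm
          _ = Bal.tmul B (∑ j, op (μ (Bal.tmul A (qj j) p)) • pj j) q'' := (sum_tmul _ _).symm
          _ = Bal.tmul B p q'' := by rw [adj4]
    | add x y hx hy =>
        simp only [map_add, LinearMap.add_apply, Bal.tmul_add]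
        rw [Finset.sum_add_distrib, hx, hy]
  refine ⟨⟨?_, ?_⟩, ?_, ?_, ?_⟩
  · -- injective
    intro β γ h
    have := congrArg F h
    rwa [hFPhi, hFPhi] at this
  · -- surjective
    intro x
    exact ⟨F x, hPhiF x⟩
  · -- additive
    intro β γ
    simp only [LinearMap.add_apply, Bal.tmul_add]
    exact Finset.sum_add_distrib
  · -- anti-multiplicative
    intro β γ
    rw [mul_sum_left]
    calc (∑ j, Bal.tmul B (pj j) ((β * γ) (qj j)))
        = ∑ j, Bal.tmul B (pj j) (β (γ (qj j))) := rfl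
      _ = ∑ j, mul (Bal.tmul B (pj j) (γ (qj j))) (∑ l, Bal.tmul B (pj l) (β (qj l))) := by
          refine Finset.sum_congr rfl fun j _ => ?_
          rw [mul_sum_right]
          calc Bal.tmul B (pj j) (β (γ (qj j)))
              = Bal.tmul B (pj j) (β (∑ l, μ (Bal.tmul A (γ (qj j)) (pj l)) • qj l)) := by
                rw [adj3]
            _ = Bal.tmul B (pj j) (∑ l, μ (Bal.tmul A (γ (qj j)) (pj l)) • β (qj l)) := by
                rw [map_sum]
                congr 1
                exact Finset.sum_congr rfl fun l _ => β.map_smul _ _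
            _ = ∑ l, Bal.tmul B (pj j) (μ (Bal.tmul A (γ (qj j)) (pj l)) • β (qj l)) :=
                tmul_sum _ _
            _ = ∑ l, mul (Bal.tmul B (pj j) (γ (qj j))) (Bal.tmul B (pj l) (β (qj l))) := by
                refine Finset.sum_congr rfl fun l _ => ?_
                rw [hmultmul, Bal.op_smul_tmul]
  · -- unit
    intro x
    have he : (∑ j, Bal.tmul B (pj j) ((1 : Module.End B Q) (qj j)))
        = ∑ j, Bal.tmul B (pj j) (qj j) := rfl
    rw [he]
    constructor
    · induction x using Bal.induction_on with
      | zero => exact mul_zero_right _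
      | tmul p q =>
          rw [mul_sum_left]
          calc (∑ j, mul (Bal.tmul B (pj j) (qj j)) (Bal.tmul B p q))
              = ∑ j, Bal.tmul B (op (μ (Bal.tmul A (qj j) p)) • pj j) q := by
                exact Finset.sum_congr rfl fun j _ => hmultmul _ _ _ _
            _ = Bal.tmul B (∑ j, op (μ (Bal.tmul A (qj j) p)) • pj j) q := (sum_tmul _ _).symm
            _ = Bal.tmul B p q := by rw [adj4]
      | add x y hx hy => rw [hmulr, hx, hy]
    · induction x using Bal.induction_on with
      | zero => exact mul_zero_left _
      | tmul p q =>
          rw [mul_sum_right]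
          calc (∑ j, mul (Bal.tmul B p q) (Bal.tmul B (pj j) (qj j)))
              = ∑ j, Bal.tmul B p (μ (Bal.tmul A q (pj j)) • qj j) := by
                refine Finset.sum_congr rfl fun j _ => ?_
                rw [hmultmul, Bal.op_smul_tmul]
            _ = Bal.tmul B p (∑ j, μ (Bal.tmul A q (pj j)) • qj j) := (tmul_sum _ _).symm
            _ = Bal.tmul B p q := by rw [adj3]
      | add x y hx hy => rw [hmull, hx, hy]
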